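/- Let Q ∈ ℂ[λ] be monic of degree K with distinct roots, and suppose the rational function R(λ) = λ^L / (Q(λ + i/2)Q(λ - i/2)) is such that T(λ)/(Q(λ+i)Q(λ-i)) = R(λ + i/2) + R(λ - i/2) for some polynomial T (the TQ relation). If s is a complex number such that s + i/2 and s - i/2 are both roots of Q, then in the partial fraction decomposition of R the coefficient c_s of 1/(λ - s)² vanishes. -/

import Mathlib

open Complex Polynomial Finset Filter Topology

lemma string_center_zero (L : ℕ) (hL : 0 < L)
    (Q T : Polynomial ℂ) (hQ0 : Q ≠ 0)
    (hTQ : T * Q = (X - C (I / 2)) ^ L * Q.comp (X + C I) +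
                   (X + C (I / 2)) ^ L * Q.comp (X - C I))
    (s : ℂ) (hsp : Q.eval (s + I / 2) = 0) (hsm : Q.eval (s - I / 2) = 0) :
    s = 0 := by
  by_contra hs
  have key : ∀ r : ℂ, T.eval r * Q.eval r =
      (r - I / 2) ^ L * Q.eval (r + I) + (r + I / 2) ^ L * Q.eval (r - I) := by
    intro r
    have := congrArg (eval r) hTQ
    simpa [eval_comp] using this
  have hup : ∀ r : ℂ, Q.eval r = 0 → Q.eval (r - I) = 0 → r - I / 2 ≠ 0 →
      Q.eval (r + I) = 0 := by
    intro r h1 h2 h3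
    have := key r
    rw [h1, h2, mul_zero, mul_zero, add_zero] at this
    rcases mul_eq_zero.mp this.symm with h | h
    · exact absurd ((pow_eq_zero_iff hL.ne').mp h) h3
    · exact h
  have hdown : ∀ r : ℂ, Q.eval r = 0 → Q.eval (r + I) = 0 → r + I / 2 ≠ 0 →
      Q.eval (r - I) = 0 := by
    intro r h1 h2 h3
    have := key r
    rw [h1, h2, mul_zero, mul_zero, zero_add] at this
    rcases mul_eq_zero.mp this.symm with h | h
    · exact (h3 ((pow_eq_zero_iff hL.ne').mp h)).elim
    · exact h
  have hIne : (I : ℂ) ≠ 0 := I_ne_zero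
  by_cases hA : ∀ m : ℕ, s + m * I ≠ 0
  · -- upward chain
    have chain : ∀ m : ℕ, Q.eval (s + I / 2 + m * I) = 0 ∧
        Q.eval (s + I / 2 + m * I - I) = 0 := by
      intro m
      induction m with
      | zero =>
          refine ⟨by simpa using hsp, ?_⟩
          convert hsm using 2
          push_cast; ring
      | succ n ih =>
          constructor
          · have := hup (s + I / 2 + n * I) ih.1 ih.2 (by
              have := hA n; intro h; apply this; linear_combination h)
            convert this using 2
            push_cast; ring
          · convert ih.1 using 2
            push_cast; ring
    have hinf : Set.Infinite {x : ℂ | Q.IsRoot x} := by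
      apply Set.infinite_of_injective_forall_mem
        (f := fun m : ℕ => s + I / 2 + m * I)
      · intro a b hab
        simp only [add_right_inj] at hab
        exact_mod_cast mul_right_cancel₀ hIne hab
      · intro m; exact (chain m).1
    exact hinf (Polynomial.finite_setOf_isRoot hQ0)
  · push_neg at hA
    obtain ⟨m₀, hm₀⟩ := hA
    have hm₀pos : 0 < m₀ := by
      rcases Nat.eq_zero_or_pos m₀ with h | h
      · subst h; simp at hm₀; exact absurd hm₀ hs
      · exact h
    have hB : ∀ m : ℕ, s - m * I ≠ 0 := by
      intro m h
      have : ((m₀ : ℂ) + m) * I = 0 := by linear_combination hm₀ - h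
      rcases mul_eq_zero.mp this with h' | h'
      · have : (m₀ : ℂ) + m ≠ 0 := by
          have : ((m₀ + m : ℕ) : ℂ) ≠ 0 := Nat.cast_ne_zero.mpr (by omega)
          push_cast at this; exact this
        exact this h'
      · exact hIne h'
    have chain : ∀ m : ℕ, Q.eval (s - I / 2 - m * I) = 0 ∧
        Q.eval (s - I / 2 - m * I + I) = 0 := by
      intro m
      induction m with
      | zero => constructor
                · simpa using hsm
                · convert hsp using 2; ring
      | succ n ih =>
          constructor
          · have := hdown (s - I / 2 - n * I) ih.1 ih.2 (by
              have := hB n; intro h; apply this; linear_combination h)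
            convert this using 2
            push_cast; ring
          · convert ih.1 using 2
            push_cast; ring
    have hinf : Set.Infinite {x : ℂ | Q.IsRoot x} := by
      apply Set.infinite_of_injective_forall_mem
        (f := fun m : ℕ => s - I / 2 - m * I)
      · intro a b hab
        simp only [sub_right_inj] at hab
        exact_mod_cast mul_right_cancel₀ hIne hab
      · intro m; exact (chain m).1
    exact hinf (Polynomial.finite_setOf_isRoot hQ0)

theorem double_pole_coefficient_vanishes (L K : ℕ) (hL : 0 < L) (hK : 0 < K)
    (l : Fin K → ℂ) (hdist : Function.Injective l)
    (Q T : Polynomial ℂ) (hQ : Q = ∏ k : Fin K, (X - C (l k)))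
    (hTQ : T * Q = (X - C (I / 2)) ^ L * Q.comp (X + C I) +
                   (X + C (I / 2)) ^ L * Q.comp (X - C I))
    (s : ℂ) (hsp : Q.eval (s + I / 2) = 0) (hsm : Q.eval (s - I / 2) = 0) :
    Tendsto (fun z : ℂ =>
        (z - s) ^ 2 * z ^ L / (Q.eval (z + I / 2) * Q.eval (z - I / 2)))
      (𝓝[≠] s) (𝓝 0) := by
  have hQ0 : Q ≠ 0 := by
    rw [hQ]
    exact (monic_prod_of_monic _ _ fun k _ => monic_X_sub_C _).ne_zero
  have hs0 : s = 0 := string_center_zero L hL Q T hQ0 hTQ s hsp hsm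
  subst hs0
  obtain ⟨kp, hkp⟩ : ∃ k, l k = I / 2 := by
    rw [hQ, eval_prod] at hsp
    obtain ⟨k, -, hk⟩ := Finset.prod_eq_zero_iff.mp hsp
    refine ⟨k, ?_⟩
    have h0 : (0 : ℂ) + I / 2 - l k = 0 := by simpa using hk
    have := sub_eq_zero.mp h0
    simpa using this.symm
  obtain ⟨km, hkm⟩ : ∃ k, l k = -(I / 2) := by
    rw [hQ, eval_prod] at hsm
    obtain ⟨k, -, hk⟩ := Finset.prod_eq_zero_iff.mp hsm
    refine ⟨k, ?_⟩
    have h0 : (0 : ℂ) - I / 2 - l k = 0 := by simpa using hk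
    have := sub_eq_zero.mp h0
    rw [← this]; ring
  set Pp : ℂ → ℂ := fun z => ∏ k ∈ Finset.univ.erase kp, (z + I / 2 - l k) with hPp
  set Pm : ℂ → ℂ := fun z => ∏ k ∈ Finset.univ.erase km, (z - I / 2 - l k) with hPm
  have hfacp : ∀ z : ℂ, Q.eval (z + I / 2) = z * Pp z := by
    intro z
    rw [hQ, eval_prod]
    simp only [eval_sub, eval_X, eval_C]
    rw [← Finset.mul_prod_erase _ _ (Finset.mem_univ kp), hkp,
      show z + I / 2 - I / 2 = z from by ring]
  have hfacm : ∀ z : ℂ, Q.eval (z - I / 2) = z * Pm z := by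
    intro z
    rw [hQ, eval_prod]
    simp only [eval_sub, eval_X, eval_C]
    rw [← Finset.mul_prod_erase _ _ (Finset.mem_univ km), hkm,
      show z - I / 2 - -(I / 2) = z from by ring]
  have hcontp : Continuous Pp :=
    continuous_finset_prod _ fun k _ => by fun_prop
  have hcontm : Continuous Pm :=
    continuous_finset_prod _ fun k _ => by fun_prop
  have hd0 : Pp 0 * Pm 0 ≠ 0 := by
    apply mul_ne_zero
    · apply Finset.prod_ne_zero_iff.mpr
      intro k hk
      intro h
      apply Finset.ne_of_mem_erase hk
      apply hdist
      rw [hkp]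
      have := sub_eq_zero.mp h
      rw [← this]; ring
    · apply Finset.prod_ne_zero_iff.mpr
      intro k hk
      intro h
      apply Finset.ne_of_mem_erase hk
      apply hdist
      rw [hkm]
      have := sub_eq_zero.mp h
      rw [← this]; ring
  have hnum : Tendsto (fun z : ℂ => z ^ L) (𝓝[≠] (0:ℂ)) (𝓝 0) := by
    have : Tendsto (fun z : ℂ => z ^ L) (𝓝 (0:ℂ)) (𝓝 ((0:ℂ) ^ L)) :=
      (continuous_pow L).tendsto 0
    rw [zero_pow hL.ne'] at this
    exact this.mono_left nhdsWithin_le_nhds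
  have hden : Tendsto (fun z : ℂ => Pp z * Pm z) (𝓝[≠] (0:ℂ)) (𝓝 (Pp 0 * Pm 0)) :=
    ((hcontp.mul hcontm).tendsto 0).mono_left nhdsWithin_le_nhds
  have hF : Tendsto (fun z : ℂ => z ^ L / (Pp z * Pm z)) (𝓝[≠] (0:ℂ)) (𝓝 0) := by
    have := hnum.div hden hd0
    rw [zero_div] at this; exact this
  apply hF.congr'
  filter_upwards [self_mem_nhdsWithin] with z hz
  have hz0 : (z : ℂ) ≠ 0 := hz
  rw [hfacp, hfacm]
  have h1 : (z - 0) ^ 2 * z ^ L = z ^ 2 * z ^ L := by ring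
  have h2 : z * Pp z * (z * Pm z) = z ^ 2 * (Pp z * Pm z) := by ring
  rw [h1, h2, mul_div_mul_left _ _ (pow_ne_zero 2 hz0)]
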